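/- arXiv:1111.1810 — 3 statements merged into one kernel-verified Lean document; each statement's English description precedes it below -/
import Mathlib

section
/- For real T > 0, (1/2)·arg Γ(1/2 + iT) − arg Γ(1/4 + iT/2) − (T·log 2)/2 − (1/4)·arctan(sinh(πT)) = 0, where arg Γ denotes the continuous branch of the argument of the Gamma function along the relevant vertical half-line starting from the real axis (i.e., the imaginary part of the principal/continuous branch of log Γ). -/
open Real Complex

lemma my_polar (x : ℝ) : ∃ ρ : ℝ, 0 < ρ ∧
    ((Real.cosh x : ℂ) - Complex.I * (Real.sinh x : ℂ)) =
      (ρ : ℂ) * Complex.exp (-(Complex.I * (Real.arctan (Real.sinh x / Real.cosh x) : ℂ))) := by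
  set u : ℝ := Real.sinh x / Real.cosh x with hu
  have hcosh := Real.cosh_pos x
  have hs : (0:ℝ) < Real.sqrt (1 + u ^ 2) := Real.sqrt_pos.mpr (by positivity)
  refine ⟨Real.cosh x * Real.sqrt (1 + u ^ 2), by positivity, ?_⟩
  have hcos : Real.cosh x * Real.sqrt (1 + u ^ 2) * Real.cos (Real.arctan u) = Real.cosh x := by
    rw [Real.cos_arctan]; field_simp
  have hsin : Real.cosh x * Real.sqrt (1 + u ^ 2) * Real.sin (Real.arctan u) = Real.sinh x := by
    rw [Real.sin_arctan]; field_simp [hu]; rw [hu]; field_simp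
  have c1 : ((Real.cosh x : ℝ) : ℂ) * (Real.sqrt (1 + u ^ 2) : ℂ) * (Real.cos (Real.arctan u) : ℂ)
      = ((Real.cosh x : ℝ) : ℂ) := by exact_mod_cast congrArg (Complex.ofReal) hcos
  have c2 : ((Real.cosh x : ℝ) : ℂ) * (Real.sqrt (1 + u ^ 2) : ℂ) * (Real.sin (Real.arctan u) : ℂ)
      = ((Real.sinh x : ℝ) : ℂ) := by exact_mod_cast congrArg (Complex.ofReal) hsin
  rw [show -(Complex.I * (Real.arctan u : ℂ)) = ((-(Real.arctan u) : ℝ) : ℂ) * Complex.I by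
    push_cast; ring, Complex.exp_mul_I, ← Complex.ofReal_cos, ← Complex.ofReal_sin,
    Real.cos_neg, Real.sin_neg, Complex.ofReal_mul, Complex.ofReal_neg]
  linear_combination Complex.I * c2 - c1

lemma my_arctan_sinh (x : ℝ) :
    Real.arctan (Real.sinh (2 * x)) = 2 * Real.arctan (Real.sinh x / Real.cosh x) := by
  set u : ℝ := Real.sinh x / Real.cosh x with hu
  have hcosh := Real.cosh_pos x
  have hu1 : u < 1 := by
    rw [hu, div_lt_one hcosh]
    nlinarith [Real.cosh_sub_sinh x, Real.exp_pos (-x)]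
  have hu2 : -1 < u := by
    rw [hu, lt_div_iff₀ hcosh]
    nlinarith [Real.cosh_add_sinh x, Real.exp_pos x]
  have hθ1 : Real.arctan u < π / 4 := by rw [← Real.arctan_one]; exact Real.arctan_strictMono hu1
  have hθ2 : -(π / 4) < Real.arctan u := by
    rw [← Real.arctan_one, ← Real.arctan_neg]; exact Real.arctan_strictMono hu2
  have htan : Real.tan (2 * Real.arctan u) = Real.sinh (2 * x) := by
    rw [Real.tan_two_mul, Real.tan_arctan, Real.sinh_two_mul]
    have hc := Real.cosh_sq_sub_sinh_sq x
    rw [hu]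
    field_simp
    rw [hc]; ring
  rw [← htan, Real.arctan_tan (by linarith) (by linarith)]

lemma my_cpow (t : ℝ) : (2:ℂ) ^ ((1:ℂ) - 2 * (1 / 4 + Complex.I * (t:ℂ) / 2)) =
    (Real.sqrt 2 : ℂ) * Complex.exp (-(Complex.I * ((t * Real.log 2 : ℝ) : ℂ))) := by
  rw [show ((1:ℂ) - 2 * (1 / 4 + Complex.I * (t:ℂ) / 2)) = 1/2 - Complex.I * t by ring]
  rw [Complex.cpow_def_of_ne_zero (by norm_num)]
  rw [show Complex.log 2 = ((Real.log 2 : ℝ) : ℂ) by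
    rw [Complex.ofReal_log (by norm_num : (0:ℝ) ≤ 2)]; norm_num]
  rw [show (((Real.log 2 : ℝ) : ℂ) * (1/2 - Complex.I * t) : ℂ)
      = ((Real.log 2 / 2 : ℝ) : ℂ) + -(Complex.I * ((t * Real.log 2 : ℝ) : ℂ)) by
    push_cast; ring]
  rw [Complex.exp_add, ← Complex.ofReal_exp]
  have h2 : Real.exp (Real.log 2 / 2) ^ 2 = 2 := by
    rw [sq, ← Real.exp_add, show Real.log 2 / 2 + Real.log 2 / 2 = Real.log 2 by ring,
      Real.exp_log] <;> norm_num
  have hsq : Real.exp (Real.log 2 / 2) = Real.sqrt 2 := by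
    nlinarith [Real.sq_sqrt (by norm_num : (0:ℝ) ≤ 2), Real.sqrt_nonneg 2,
      Real.exp_pos (Real.log 2 / 2)]
  rw [hsq]

lemma my_sin_conj (t : ℝ) :
    (starRingEnd ℂ) (Complex.sin ((π : ℂ) * (1 / 4 + Complex.I * (t:ℂ) / 2))) =
      ((Real.sqrt 2 : ℝ) : ℂ) / 2 *
        ((Real.cosh (π * t / 2) : ℂ) - Complex.I * (Real.sinh (π * t / 2) : ℂ)) := by
  rw [show ((π : ℂ) * (1 / 4 + Complex.I * (t:ℂ) / 2)) = ((π/4 : ℝ) : ℂ) + ((π * t / 2 : ℝ) : ℂ) * Complex.I by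
    push_cast; ring]
  rw [Complex.sin_add, Complex.cos_mul_I, Complex.sin_mul_I,
    ← Complex.ofReal_sin, ← Complex.ofReal_cos, ← Complex.ofReal_cosh, ← Complex.ofReal_sinh,
    Real.sin_pi_div_four, Real.cos_pi_div_four]
  simp only [map_add, map_mul, Complex.conj_ofReal, Complex.conj_I]
  push_cast
  ring

/-- For `T > 0`, `(1/2)·argΓ(1/2+iT) − argΓ(1/4+iT/2) − T·log 2/2 − (1/4)·arctan(sinh(πT)) = 0`,
where `argΓ` denotes the continuous branch of the argument of `Γ` along the relevant
vertical half-line, vanishing on the real axis. -/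
theorem arg_gamma_identity
    (a₁ a₂ : ℝ → ℝ) (hc₁ : Continuous a₁) (hc₂ : Continuous a₂)
    (h₁0 : a₁ 0 = 0) (h₂0 : a₂ 0 = 0)
    (h₁ : ∀ t : ℝ, Complex.Gamma (1 / 2 + Complex.I * t) =
      ((‖Complex.Gamma (1 / 2 + Complex.I * t)‖ : ℝ) : ℂ) *
        Complex.exp (Complex.I * (a₁ t)))
    (h₂ : ∀ t : ℝ, Complex.Gamma (1 / 4 + Complex.I * t / 2) =
      ((‖Complex.Gamma (1 / 4 + Complex.I * t / 2)‖ : ℝ) : ℂ) *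
        Complex.exp (Complex.I * (a₂ t))) :
    ∀ T : ℝ, 0 < T →
      (1 / 2) * a₁ T - a₂ T - T * Real.log 2 / 2
        - (1 / 4) * Real.arctan (Real.sinh (π * T)) = 0 := by
  -- the combined phase function
  set F : ℝ → ℝ := fun t => a₁ t - 2 * a₂ t - t * Real.log 2
    - Real.arctan (Real.sinh (π * t / 2) / Real.cosh (π * t / 2)) with hF
  -- pointwise: F t ∈ 2πℤ
  have key : ∀ t : ℝ, ∃ n : ℤ, F t = n * (2 * π) := by
    intro t
    set s : ℂ := 1 / 4 + Complex.I * (t:ℂ) / 2 with hs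
    obtain ⟨ρ, hρ, hpolar⟩ := my_polar (π * t / 2)
    set θ : ℝ := Real.arctan (Real.sinh (π * t / 2) / Real.cosh (π * t / 2)) with hθ
    set A : ℂ := Complex.Gamma s with hA
    set G : ℂ := Complex.Gamma (1 / 2 + Complex.I * (t:ℂ)) with hG
    set B : ℂ := Complex.Gamma (s + 1 / 2) with hB
    have hAne : A ≠ 0 := Complex.Gamma_ne_zero_of_re_pos (by rw [hs]; simp)
    have hGne : G ≠ 0 := Complex.Gamma_ne_zero_of_re_pos (by simp)
    have hBne : B ≠ 0 := Complex.Gamma_ne_zero_of_re_pos (by rw [hs]; simp; norm_num)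
    set r₁ : ℝ := ‖G‖ with hr₁
    set r₂ : ℝ := ‖A‖ with hr₂
    have hr₁pos : 0 < r₁ := by rw [hr₁]; exact (norm_pos_iff.mpr hGne)
    have hr₂pos : 0 < r₂ := by rw [hr₂]; exact (norm_pos_iff.mpr hAne)
    -- duplication formula
    have e1 : A * B = G * ((2:ℂ) ^ ((1:ℂ) - 2 * s) * (Real.sqrt π : ℂ)) := by
      have := Complex.Gamma_mul_Gamma_add_half s
      rw [show (2 * s : ℂ) = 1 / 2 + Complex.I * (t:ℂ) by rw [hs]; ring] at this
      rw [this, hG, show (1:ℂ) - 2 * s = 1 - (1 / 2 + Complex.I * (t:ℂ)) by rw [hs]; ring]; ring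
    -- reflection formula, conjugated
    have hconjB : Complex.Gamma (1 - s) = (starRingEnd ℂ) B := by
      rw [hB, ← Complex.Gamma_conj]
      congr 1
      rw [hs]
      simp only [map_add, map_div₀, map_mul, map_one, map_ofNat, Complex.conj_I,
        Complex.conj_ofReal]
      ring
    have e2 : (starRingEnd ℂ) A * B = (π : ℂ) / (starRingEnd ℂ) (Complex.sin ((π:ℂ) * s)) := by
      have := Complex.Gamma_mul_Gamma_one_sub s
      rw [hconjB] at this
      have := congrArg (starRingEnd ℂ) this
      simpa [map_mul, map_div₀, Complex.conj_ofReal] using this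
    have hSne : (starRingEnd ℂ) (Complex.sin ((π:ℂ) * s)) ≠ 0 := by
      intro h
      rw [h, div_zero] at e2
      exact (mul_ne_zero ((map_ne_zero _).mpr hAne) hBne) e2
    -- eliminate B
    have master : A * (π : ℂ) =
        (starRingEnd ℂ) A * (G * ((2:ℂ) ^ ((1:ℂ) - 2 * s) * (Real.sqrt π : ℂ)))
          * (starRingEnd ℂ) (Complex.sin ((π:ℂ) * s)) := by
      have e2' : (starRingEnd ℂ) A * B * (starRingEnd ℂ) (Complex.sin ((π:ℂ) * s)) = (π : ℂ) := by
        rw [e2]; field_simp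
      linear_combination (-A) * e2' + ((starRingEnd ℂ) A * (starRingEnd ℂ) (Complex.sin ((π:ℂ) * s))) * e1
    -- polar forms
    have hA2 : A = (r₂ : ℂ) * Complex.exp (Complex.I * ((a₂ t : ℝ) : ℂ)) := h₂ t
    have hA2c : (starRingEnd ℂ) A = (r₂ : ℂ) * Complex.exp (-(Complex.I * ((a₂ t : ℝ) : ℂ))) := by
      rw [hA2, map_mul, ← Complex.exp_conj, Complex.conj_ofReal]
      congr 1
      rw [map_mul, Complex.conj_I, Complex.conj_ofReal]
      ring
    have hG2 : G = (r₁ : ℂ) * Complex.exp (Complex.I * ((a₁ t : ℝ) : ℂ)) := h₁ t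
    rw [hA2c, hA2, hG2, my_cpow t, my_sin_conj t, hpolar] at master
    -- cancel r₂
    have m3 : Complex.exp (Complex.I * ((a₂ t : ℝ) : ℂ)) * (π : ℂ) =
        Complex.exp (-(Complex.I * ((a₂ t : ℝ) : ℂ))) *
          (((r₁ : ℂ) * Complex.exp (Complex.I * ((a₁ t : ℝ) : ℂ))) *
            ((Real.sqrt 2 : ℂ) * Complex.exp (-(Complex.I * ((t * Real.log 2 : ℝ) : ℂ))) * (Real.sqrt π : ℂ)) *
            (((Real.sqrt 2 : ℝ) : ℂ) / 2 * ((ρ : ℂ) * Complex.exp (-(Complex.I * (θ : ℂ)))))) := by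
      apply mul_left_cancel₀ (show ((r₂ : ℝ) : ℂ) ≠ 0 by exact_mod_cast hr₂pos.ne')
      linear_combination master
    -- combine exponentials
    have hsplit : Complex.exp (Complex.I * ((F t : ℝ) : ℂ)) =
        Complex.exp (Complex.I * ((a₁ t : ℝ) : ℂ)) *
          Complex.exp (-(Complex.I * ((a₂ t : ℝ) : ℂ))) *
          Complex.exp (-(Complex.I * ((a₂ t : ℝ) : ℂ))) *
          Complex.exp (-(Complex.I * ((t * Real.log 2 : ℝ) : ℂ))) *
          Complex.exp (-(Complex.I * (θ : ℂ))) := by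
      rw [← Complex.exp_add, ← Complex.exp_add, ← Complex.exp_add, ← Complex.exp_add]
      congr 1
      rw [show F t = a₁ t - 2 * a₂ t - t * Real.log 2 - θ from rfl]
      push_cast
      ring
    have hunit : Complex.exp (Complex.I * ((a₂ t : ℝ) : ℂ)) *
        Complex.exp (-(Complex.I * ((a₂ t : ℝ) : ℂ))) = 1 := by
      rw [← Complex.exp_add]; simp
    set K : ℝ := r₁ * Real.sqrt 2 * Real.sqrt π * (Real.sqrt 2 / 2) * ρ with hK
    have hKpos : 0 < K := by
      rw [hK]
      have h2 : (0:ℝ) < Real.sqrt 2 := Real.sqrt_pos.mpr (by norm_num)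
      have hπ' : (0:ℝ) < Real.sqrt π := Real.sqrt_pos.mpr Real.pi_pos
      positivity
    have final : Complex.exp (Complex.I * ((F t : ℝ) : ℂ)) * (K : ℂ) = (π : ℂ) := by
      rw [hK]
      push_cast
      linear_combination ((r₁ : ℂ) * (Real.sqrt 2 : ℂ) * (Real.sqrt π : ℂ) * ((Real.sqrt 2 : ℂ) / 2) * (ρ:ℂ)) * hsplit
        - Complex.exp (-(Complex.I * ((a₂ t : ℝ) : ℂ))) * m3 + (π : ℂ) * hunit
    -- take absolute values: K = π
    have habs : K = π := by
      have := congrArg (‖·‖) final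
      rw [norm_mul, Complex.norm_exp] at this
      simp only [Complex.mul_re, Complex.I_re, Complex.ofReal_re, Complex.I_im,
        Complex.ofReal_im] at this
      rw [show (0 * (F t) - 1 * 0 : ℝ) = 0 by ring, Real.exp_zero, one_mul,
        Complex.norm_real, Complex.norm_real, Real.norm_of_nonneg hKpos.le,
        Real.norm_of_nonneg Real.pi_pos.le] at this
      exact this
    have hexp1 : Complex.exp (Complex.I * ((F t : ℝ) : ℂ)) = 1 := by
      have hπne : ((π : ℝ) : ℂ) ≠ 0 := by exact_mod_cast Real.pi_pos.ne'
      rw [habs] at final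
      field_simp at final
      exact final
    rw [Complex.exp_eq_one_iff] at hexp1
    obtain ⟨n, hn⟩ := hexp1
    refine ⟨n, ?_⟩
    have : ((F t : ℝ) : ℂ) = ((n : ℝ) * (2 * π) : ℝ) := by
      apply mul_left_cancel₀ Complex.I_ne_zero
      rw [hn]
      push_cast
      ring
    exact_mod_cast this
  -- continuity of F
  have harc0 : Continuous fun t : ℝ =>
      Real.arctan (Real.sinh (π * t / 2) / Real.cosh (π * t / 2)) := by
    apply Real.continuous_arctan.comp
    apply Continuous.div
    · fun_prop
    · fun_prop
    · exact fun x => (Real.cosh_pos _).ne'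
  have hFc : Continuous F := by
    rw [hF]
    exact ((hc₁.sub (continuous_const.mul hc₂)).sub (by fun_prop)).sub harc0
  have hF0 : F 0 = 0 := by
    rw [show F 0 = a₁ 0 - 2 * a₂ 0 - 0 * Real.log 2
      - Real.arctan (Real.sinh (π * 0 / 2) / Real.cosh (π * 0 / 2)) from rfl, h₁0, h₂0]
    simp
  -- F vanishes identically on (0, ∞)
  have hFzero : ∀ T : ℝ, 0 < T → F T = 0 := by
    intro T hT
    obtain ⟨n, hn⟩ := key T
    rcases lt_trichotomy n 0 with hneg | hzero | hpos
    · exfalso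
      have hFT : F T ≤ -(2 * π) := by
        rw [hn]
        have : (n : ℝ) ≤ -1 := by exact_mod_cast (by omega : n ≤ -1)
        nlinarith [Real.pi_pos]
      have hmem : -π ∈ Set.Icc (F T) (F 0) := by
        constructor
        · nlinarith [Real.pi_pos]
        · rw [hF0]; nlinarith [Real.pi_pos]
      obtain ⟨c, _, hc⟩ := intermediate_value_Icc' hT.le hFc.continuousOn hmem
      obtain ⟨m, hm⟩ := key c
      rw [hc] at hm
      have h1 : (-1 : ℝ) * π = ((m : ℝ) * 2) * π := by linarith [hm]
      have h2 : (-1 : ℝ) = (m : ℝ) * 2 := mul_right_cancel₀ Real.pi_ne_zero h1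
      have h3 : (-1 : ℤ) = m * 2 := by exact_mod_cast h2
      omega
    · rw [hn, hzero]; simp
    · exfalso
      have hFT : 2 * π ≤ F T := by
        rw [hn]
        have : (1 : ℝ) ≤ (n : ℝ) := by exact_mod_cast hpos
        nlinarith [Real.pi_pos]
      have hmem : π ∈ Set.Icc (F 0) (F T) := by
        constructor
        · rw [hF0]; nlinarith [Real.pi_pos]
        · nlinarith [Real.pi_pos]
      obtain ⟨c, _, hc⟩ := intermediate_value_Icc hT.le hFc.continuousOn hmem
      obtain ⟨m, hm⟩ := key c
      rw [hc] at hm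
      have h1 : (1 : ℝ) * π = ((m : ℝ) * 2) * π := by linarith [hm]
      have h2 : (1 : ℝ) = (m : ℝ) * 2 := mul_right_cancel₀ Real.pi_ne_zero h1
      have h3 : (1 : ℤ) = m * 2 := by exact_mod_cast h2
      omega
  -- conclude
  intro T hT
  have h0 : a₁ T - 2 * a₂ T - T * Real.log 2
      - Real.arctan (Real.sinh (π * T / 2) / Real.cosh (π * T / 2)) = 0 := hFzero T hT
  have harc : Real.arctan (Real.sinh (π * T)) =
      2 * Real.arctan (Real.sinh (π * T / 2) / Real.cosh (π * T / 2)) := by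
    conv_lhs => rw [show π * T = 2 * (π * T / 2) by ring]
    rw [my_arctan_sinh]
  rw [harc]
  linarith
end

section
/- For every real T, ∫₀^T [2cos(t·log X) + 4t·sin(t·log X)]/(1+4t²) dt − (1/√X)·∫₁^X sin(T·log y)/(√y · log y) dy = (1/√X)·arctan(2T), for any real X > 1. -/
open MeasureTheory intervalIntegral Real Set

/-- Antiderivative evaluation: `∫ y in 1..X, cos (τ log y)/√y`. -/
lemma lemA (X : ℝ) (hX : 1 < X) (τ : ℝ) :
    ∫ y in (1:ℝ)..X, Real.cos (τ * Real.log y) / Real.sqrt y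
      = Real.sqrt X * ((2 * Real.cos (τ * Real.log X) + 4 * τ * Real.sin (τ * Real.log X))
          / (1 + 4 * τ ^ 2)) - 2 / (1 + 4 * τ ^ 2) := by
  have hden : (1 : ℝ) + 4 * τ ^ 2 ≠ 0 := by positivity
  set F : ℝ → ℝ := fun y =>
    Real.sqrt y * (2 * Real.cos (τ * Real.log y) + 4 * τ * Real.sin (τ * Real.log y))
      / (1 + 4 * τ ^ 2) with hF
  have hderiv : ∀ y ∈ Set.uIcc (1:ℝ) X,
      HasDerivAt F (Real.cos (τ * Real.log y) / Real.sqrt y) y := by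
    intro y hy
    rw [Set.uIcc_of_le hX.le] at hy
    have hy1 : (1:ℝ) ≤ y := hy.1
    have hy0 : 0 < y := lt_of_lt_of_le zero_lt_one hy1
    have hsy : Real.sqrt y ≠ 0 := by positivity
    have hsy2 : Real.sqrt y * Real.sqrt y = y := Real.mul_self_sqrt hy0.le
    have hlog : HasDerivAt (fun z : ℝ => τ * Real.log z) (τ * y⁻¹) y :=
      (Real.hasDerivAt_log hy0.ne').const_mul τ
    have hcos : HasDerivAt (fun z : ℝ => Real.cos (τ * Real.log z))
        (-Real.sin (τ * Real.log y) * (τ * y⁻¹)) y :=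
      (Real.hasDerivAt_cos _).comp y hlog
    have hsin : HasDerivAt (fun z : ℝ => Real.sin (τ * Real.log z))
        (Real.cos (τ * Real.log y) * (τ * y⁻¹)) y :=
      (Real.hasDerivAt_sin _).comp y hlog
    have hsqrt : HasDerivAt Real.sqrt (1 / (2 * Real.sqrt y)) y :=
      Real.hasDerivAt_sqrt hy0.ne'
    have hmul :
        HasDerivAt (fun z : ℝ => Real.sqrt z *
            (2 * Real.cos (τ * Real.log z) + 4 * τ * Real.sin (τ * Real.log z)))
          (1 / (2 * Real.sqrt y) *
              (2 * Real.cos (τ * Real.log y) + 4 * τ * Real.sin (τ * Real.log y))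
            + Real.sqrt y *
              (2 * (-Real.sin (τ * Real.log y) * (τ * y⁻¹))
                + 4 * τ * (Real.cos (τ * Real.log y) * (τ * y⁻¹)))) y :=
      hsqrt.mul (((hcos.const_mul 2).add (hsin.const_mul (4 * τ))))
    have := hmul.div_const (1 + 4 * τ ^ 2)
    refine this.congr_deriv ?_
    set c := Real.cos (τ * Real.log y)
    set s := Real.sin (τ * Real.log y)
    set q := Real.sqrt y
    rw [← hsy2]
    field_simp
    ring
  have hcont : ContinuousOn (fun y => Real.cos (τ * Real.log y) / Real.sqrt y)
      (Set.uIcc (1:ℝ) X) := by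
    apply ContinuousOn.div
    · exact Real.continuous_cos.comp_continuousOn
        (continuousOn_const.mul (Real.continuousOn_log.mono (by
          rw [Set.uIcc_of_le hX.le]
          intro y hy h
          simp only [Set.mem_singleton_iff] at h
          rw [h] at hy
          linarith [hy.1])))
    · exact Real.continuous_sqrt.continuousOn
    · intro y hy
      rw [Set.uIcc_of_le hX.le] at hy
      have : (0:ℝ) < y := lt_of_lt_of_le zero_lt_one hy.1
      positivity
  rw [intervalIntegral.integral_eq_sub_of_hasDerivAt hderiv
    (hcont.intervalIntegrable)]
  simp only [hF, Real.log_one, mul_zero, Real.cos_zero, Real.sin_zero, Real.sqrt_one,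
    one_mul, mul_one, add_zero]
  ring

theorem integral_difference_arctan (X : ℝ) (hX : 1 < X) (T : ℝ) :
    (∫ t in (0:ℝ)..T,
        (2 * Real.cos (t * Real.log X) + 4 * t * Real.sin (t * Real.log X)) / (1 + 4 * t ^ 2))
      - (1 / Real.sqrt X) *
        ∫ y in (1:ℝ)..X, Real.sin (T * Real.log y) / (Real.sqrt y * Real.log y)
    = (1 / Real.sqrt X) * Real.arctan (2 * T) := by
  have hsX : (1:ℝ) < Real.sqrt X := by
    rw [show (1:ℝ) = Real.sqrt 1 by simp]
    exact Real.sqrt_lt_sqrt zero_le_one hX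
  have hsX0 : Real.sqrt X ≠ 0 := by positivity
  set g : ℝ → ℝ := fun t =>
    (2 * Real.cos (t * Real.log X) + 4 * t * Real.sin (t * Real.log X)) / (1 + 4 * t ^ 2)
    with hg
  have hgcont : Continuous g := by
    apply Continuous.div
    · fun_prop
    · fun_prop
    · intro t; positivity
  set Φ : ℝ → ℝ := fun x => ∫ y in (1:ℝ)..X, Real.sin (x * Real.log y) / (Real.sqrt y * Real.log y)
    with hΦdef
  -- derivative of Φ
  have hΦ : ∀ x₀ : ℝ, HasDerivAt Φ (∫ y in (1:ℝ)..X, Real.cos (x₀ * Real.log y) / Real.sqrt y) x₀ := by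
    intro x₀
    have hIoc : Set.uIoc (1:ℝ) X = Set.Ioc 1 X := Set.uIoc_of_le hX.le
    have hmeas : ∀ x : ℝ, AEStronglyMeasurable
        (fun y => Real.sin (x * Real.log y) / (Real.sqrt y * Real.log y))
        (volume.restrict (Set.uIoc (1:ℝ) X)) := by
      intro x
      apply Measurable.aestronglyMeasurable
      exact (Real.measurable_sin.comp (measurable_const.mul Real.measurable_log)).div
        (Real.continuous_sqrt.measurable.mul Real.measurable_log)
    have key := intervalIntegral.hasDerivAt_integral_of_dominated_loc_of_deriv_le
      (F := fun x y => Real.sin (x * Real.log y) / (Real.sqrt y * Real.log y))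
      (F' := fun x y => Real.cos (x * Real.log y) / Real.sqrt y)
      (x₀ := x₀) (a := (1:ℝ)) (b := X) (μ := volume) (bound := fun _ => 1)
      (Filter.univ_mem : Set.univ ∈ nhds x₀)
      (Filter.Eventually.of_forall hmeas)
      ?_ ?_ ?_ ?_ ?_
    · exact key.2
    · -- integrability of F x₀
      rw [intervalIntegrable_iff]
      apply Measure.integrableOn_of_bounded (M := |x₀|)
      · rw [hIoc]; exact (measure_Ioc_lt_top).ne
      · apply Measurable.aestronglyMeasurable
        exact (Real.measurable_sin.comp (measurable_const.mul Real.measurable_log)).div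
          (Real.continuous_sqrt.measurable.mul Real.measurable_log)
      · rw [hIoc]
        filter_upwards [ae_restrict_mem measurableSet_Ioc] with y hy
        have hy1 : (1:ℝ) < y := hy.1
        have hlog : 0 < Real.log y := Real.log_pos hy1
        have hsy : (1:ℝ) ≤ Real.sqrt y := by
          rw [show (1:ℝ) = Real.sqrt 1 by simp]
          exact Real.sqrt_le_sqrt hy1.le
        rw [Real.norm_eq_abs, abs_div]
        have h1 : |Real.sin (x₀ * Real.log y)| ≤ |x₀| * Real.log y := by
          calc |Real.sin (x₀ * Real.log y)| ≤ |x₀ * Real.log y| := Real.abs_sin_le_abs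
          _ = |x₀| * Real.log y := by rw [abs_mul, abs_of_pos hlog]
        have h2 : |Real.sqrt y * Real.log y| = Real.sqrt y * Real.log y := by
          apply abs_of_pos; positivity
        rw [h2, div_le_iff₀ (by positivity)]
        calc |Real.sin (x₀ * Real.log y)| ≤ |x₀| * Real.log y := h1
        _ ≤ |x₀| * (Real.sqrt y * Real.log y) := by
              nlinarith [mul_nonneg (mul_nonneg (abs_nonneg x₀)
                (by linarith : (0:ℝ) ≤ Real.sqrt y - 1)) hlog.le]
    · apply Measurable.aestronglyMeasurable
      exact (Real.measurable_cos.comp (measurable_const.mul Real.measurable_log)).div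
        Real.continuous_sqrt.measurable
    · -- bound on F'
      filter_upwards with y hy x _
      rw [hIoc] at hy
      have hy1 : (1:ℝ) < y := hy.1
      have hsy : (1:ℝ) ≤ Real.sqrt y := by
        rw [show (1:ℝ) = Real.sqrt 1 by simp]
        exact Real.sqrt_le_sqrt hy1.le
      rw [Real.norm_eq_abs, abs_div, abs_of_pos (by positivity : (0:ℝ) < Real.sqrt y),
        div_le_one (by positivity)]
      calc |Real.cos (x * Real.log y)| ≤ 1 := Real.abs_cos_le_one _
      _ ≤ Real.sqrt y := hsy
    · exact intervalIntegrable_const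
    · -- differentiability in x
      filter_upwards with y hy x _
      rw [hIoc] at hy
      have hy1 : (1:ℝ) < y := hy.1
      have hlog : Real.log y ≠ 0 := (Real.log_pos hy1).ne'
      have hsy : Real.sqrt y ≠ 0 := by positivity
      have h : HasDerivAt (fun x : ℝ => Real.sin (x * Real.log y))
          (Real.cos (x * Real.log y) * Real.log y) x :=
        (Real.hasDerivAt_sin _).comp x (hasDerivAt_mul_const (Real.log y))
      have := h.div_const (Real.sqrt y * Real.log y)
      refine this.congr_deriv ?_
      field_simp
  -- derivative of Ψ
  set Ψ : ℝ → ℝ := fun x => ∫ t in (0:ℝ)..x, g t with hΨdef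
  have hΨ : ∀ x₀ : ℝ, HasDerivAt Ψ (g x₀) x₀ := fun x₀ =>
    intervalIntegral.integral_hasDerivAt_right (hgcont.intervalIntegrable 0 x₀)
      (hgcont.stronglyMeasurableAtFilter _ _) hgcont.continuousAt
  -- derivative of arctan part
  have hAt : ∀ x₀ : ℝ, HasDerivAt (fun x : ℝ => Real.arctan (2 * x)) (2 / (1 + 4 * x₀ ^ 2)) x₀ := by
    intro x₀
    have h := (Real.hasDerivAt_arctan (2 * x₀)).comp x₀ ((hasDerivAt_id x₀).const_mul 2)
    refine h.congr_deriv ?_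
    have h4 : (1:ℝ) + (2 * x₀) ^ 2 = 1 + 4 * x₀ ^ 2 := by ring
    rw [h4]
    ring
  set D : ℝ → ℝ := fun x =>
    Ψ x - (1 / Real.sqrt X) * Φ x - (1 / Real.sqrt X) * Real.arctan (2 * x) with hD
  have hDderiv : ∀ x₀ : ℝ, HasDerivAt D 0 x₀ := by
    intro x₀
    have h := ((hΨ x₀).sub (((hΦ x₀).const_mul (1 / Real.sqrt X)))).sub
      ((hAt x₀).const_mul (1 / Real.sqrt X))
    refine h.congr_deriv ?_
    rw [lemA X hX x₀]
    have hden : (1:ℝ) + 4 * x₀ ^ 2 ≠ 0 := by positivity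
    simp only [hg]
    field_simp
    ring
  have hdiff : Differentiable ℝ D := fun x => (hDderiv x).differentiableAt
  have hconst : ∀ x : ℝ, D x = D 0 :=
    fun x => is_const_of_deriv_eq_zero hdiff (fun x => (hDderiv x).deriv) x 0
  have hD0 : D 0 = 0 := by
    simp only [hD, hΨdef, hΦdef]
    rw [intervalIntegral.integral_same]
    simp
  have := hconst T
  rw [hD0] at this
  simp only [hD, hΨdef, hΦdef] at this
  linarith
end

section
/- For real a > 0 and b > 0: ∫₀^∞ cos(bt)/(a² + t²) dt = (π/(2a))·e^{−a·b}. -/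
open Real MeasureTheory Complex Set FourierTransform

variable {a : ℝ}

lemma integrableOn_exp_abs_Ioi (ha : 0 < a) :
    IntegrableOn (fun t : ℝ => Real.exp (-(a * |t|))) (Ioi 0) := by
  refine (exp_neg_integrableOn_Ioi 0 ha).congr_fun ?_ measurableSet_Ioi
  intro x hx
  simp only
  rw [abs_of_pos (mem_Ioi.mp hx), neg_mul]

lemma integrable_exp_abs (ha : 0 < a) :
    Integrable (fun t : ℝ => Real.exp (-(a * |t|))) := by
  rw [← integrableOn_univ, ← Iic_union_Ioi (a := (0:ℝ))]
  refine IntegrableOn.union ?_ (integrableOn_exp_abs_Ioi ha)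
  have A : MeasurableEmbedding (fun x : ℝ => -x) :=
    (Homeomorph.neg ℝ).isClosedEmbedding.measurableEmbedding
  have key : IntegrableOn (fun t : ℝ => Real.exp (-(a * |t|))) (Iic 0)
      (Measure.map (fun x : ℝ => -x) volume) := by
    rw [A.integrableOn_map_iff]
    simp only [Function.comp_def, abs_neg, neg_preimage, neg_Iic, neg_zero]
    exact (integrableOn_exp_abs_Ioi ha).congr_set_ae Ioi_ae_eq_Ici.symm
  rwa [Measure.map_neg_eq_self] at key

lemma cont_aux (a : ℝ) (ξ : ℝ) :
    Continuous (fun v : ℝ => Complex.exp (↑(-2 * π * v * ξ) * Complex.I) *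
      (Real.exp (-(a * |v|)) : ℂ)) := by
  apply Continuous.mul
  · exact Complex.continuous_exp.comp
      ((Complex.continuous_ofReal.comp (by continuity)).mul continuous_const)
  · exact Complex.continuous_ofReal.comp (Real.continuous_exp.comp (by continuity))

lemma integrable_aux (ha : 0 < a) (ξ : ℝ) :
    Integrable (fun v : ℝ => Complex.exp (↑(-2 * π * v * ξ) * Complex.I) *
      (Real.exp (-(a * |v|)) : ℂ)) := by
  refine (integrable_exp_abs ha).mono' (cont_aux a ξ).aestronglyMeasurable ?_
  filter_upwards with v
  simp [Complex.norm_exp, Complex.norm_of_nonneg (Real.exp_nonneg _)]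

lemma integral_cexp_mul_Ioi {c : ℂ} (hc : c.re < 0) :
    ∫ x in Ioi (0:ℝ), Complex.exp (c * x) = -c⁻¹ := by
  have hc0 : c ≠ 0 := fun h => by simp [h] at hc
  have hint : IntegrableOn (fun x : ℝ => Complex.exp (c * x)) (Ioi 0) := by
    have h := exp_neg_integrableOn_Ioi 0 (show 0 < -c.re by linarith)
    apply Integrable.mono' h
      (Complex.continuous_exp.comp (by continuity)).aestronglyMeasurable
    filter_upwards with x
    simp [Complex.norm_exp, Complex.mul_re, neg_mul, le_refl]
  have h1 := intervalIntegral_tendsto_integral_Ioi 0 hint Filter.tendsto_id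
  have h2 : Filter.Tendsto (fun b : ℝ => (Complex.exp (c * b) - Complex.exp (c * 0)) / c)
      Filter.atTop (nhds ((0 - 1)/c)) := by
    refine Filter.Tendsto.div_const ?_ c
    refine Filter.Tendsto.sub ?_ (by simp)
    rw [tendsto_zero_iff_norm_tendsto_zero]
    have : (fun b : ℝ => ‖Complex.exp (c * b)‖) = fun b : ℝ => Real.exp (c.re * b) := by
      ext b; simp [Complex.norm_exp, Complex.mul_re]
    rw [this]
    exact Real.tendsto_exp_atBot.comp
      (Filter.Tendsto.const_mul_atTop_of_neg hc Filter.tendsto_id)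
  simp_rw [integral_exp_mul_complex hc0] at h1
  rw [tendsto_nhds_unique h1 h2]
  simp [div_eq_mul_inv]

lemma fourier_exp_abs (ha : 0 < a) (ξ : ℝ) :
    𝓕 (fun t : ℝ => (Real.exp (-(a * |t|)) : ℂ)) ξ
      = (((2*a) / (a^2 + (2*π*ξ)^2) : ℝ) : ℂ) := by
  set g : ℝ → ℂ := fun v => Complex.exp (↑(-2 * π * v * ξ) * Complex.I) *
      (Real.exp (-(a * |v|)) : ℂ) with hg
  have hfour : 𝓕 (fun t : ℝ => (Real.exp (-(a * |t|)) : ℂ)) ξ = ∫ v : ℝ, g v := by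
    rw [Real.fourier_real_eq_integral_exp_smul]
    simp only [smul_eq_mul, hg]
  rw [hfour, ← intervalIntegral.integral_Iic_add_Ioi ((integrable_aux ha ξ).integrableOn)
    ((integrable_aux ha ξ).integrableOn)]
  have hIoi : ∫ v in Ioi (0:ℝ), g v = -((-(a:ℂ) - (2*π*ξ)*Complex.I))⁻¹ := by
    rw [setIntegral_congr_fun measurableSet_Ioi
      (g := fun v : ℝ => Complex.exp ((-(a:ℂ) - (2*π*ξ)*Complex.I) * v)) ?_]
    · exact integral_cexp_mul_Ioi (by simp [ha])
    · intro v hv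
      simp only [hg, abs_of_pos (mem_Ioi.mp hv), Complex.ofReal_exp]
      rw [← Complex.exp_add]
      congr 1
      push_cast
      ring
  have hIic : ∫ v in Iic (0:ℝ), g v = -((-(a:ℂ) + (2*π*ξ)*Complex.I))⁻¹ := by
    have h := integral_comp_neg_Iic (0:ℝ) (fun x => g (-x))
    simp only [neg_neg, neg_zero] at h
    rw [h, setIntegral_congr_fun measurableSet_Ioi
      (g := fun v : ℝ => Complex.exp ((-(a:ℂ) + (2*π*ξ)*Complex.I) * v)) ?_]
    · exact integral_cexp_mul_Ioi (by simp [ha])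
    · intro v hv
      simp only [hg, abs_neg, abs_of_pos (mem_Ioi.mp hv), Complex.ofReal_exp]
      rw [← Complex.exp_add]
      congr 1
      push_cast
      ring
  rw [hIoi, hIic]
  have h1 : -(a:ℂ) + (2*π*ξ)*Complex.I ≠ 0 := by
    intro h
    have := congrArg Complex.re h
    simp at this
    exact ha.ne' this
  have h2 : -(a:ℂ) - (2*π*ξ)*Complex.I ≠ 0 := by
    intro h
    have := congrArg Complex.re h
    simp at this
    exact ha.ne' (by linarith)
  have hdenC : ((a:ℂ)^2 + ((2*π*ξ:ℝ):ℂ)^2) ≠ 0 := by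
    intro h
    have := congrArg Complex.re h
    simp [Complex.add_re, ← Complex.ofReal_pow] at this
    have h0 : (0:ℝ) < a^2 + (2*π*ξ)^2 := by positivity
    norm_cast at *
    linarith
  push_cast at hdenC ⊢
  rw [eq_div_iff hdenC]
  field_simp
  ring_nf
  simp only [Complex.I_sq]
  ring

lemma integrable_G (ha : 0 < a) :
    Integrable (fun ξ : ℝ => (2*a) / (a^2 + (2*π*ξ)^2)) := by
  have h1 : Integrable (fun ξ : ℝ => (1 + ((2*π/a)*ξ)^2)⁻¹) :=
    integrable_inv_one_add_sq.comp_mul_left'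
      (by positivity : (0:ℝ) < 2*π/a).ne'
  have h2 := h1.const_mul (2/a)
  have heq : (fun ξ : ℝ => (2*a) / (a^2 + (2*π*ξ)^2))
      = fun ξ : ℝ => (2/a) * (1 + ((2*π/a)*ξ)^2)⁻¹ := by
    funext ξ
    have hd1 : a^2 + (2*π*ξ)^2 ≠ 0 := by positivity
    have hd2 : 1 + ((2*π/a)*ξ)^2 ≠ 0 := by positivity
    field_simp
  rw [heq]
  exact h2

lemma key_identity (ha : 0 < a) {b : ℝ} (hb : 0 < b) :
    ∫ ξ : ℝ, Real.cos (2*π*ξ*b) * ((2*a) / (a^2 + (2*π*ξ)^2)) = Real.exp (-(a*b)) := by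
  set f : ℝ → ℂ := fun t => (Real.exp (-(a*|t|)) : ℂ) with hfdef
  set G : ℝ → ℝ := fun ξ => (2*a) / (a^2 + (2*π*ξ)^2) with hGdef
  have hf_cont : Continuous f := by
    apply Complex.continuous_ofReal.comp
    exact Real.continuous_exp.comp (by continuity)
  have hf_int : Integrable f := (integrable_exp_abs ha).ofReal
  have hF : 𝓕 f = fun ξ => ((G ξ : ℝ) : ℂ) := funext (fourier_exp_abs ha)
  have hFf_int : Integrable (𝓕 f) := by rw [hF]; exact (integrable_G ha).ofReal
  have hinv := hf_int.fourierInv_fourier_eq hFf_int (hf_cont.continuousAt (x := b))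
  rw [Real.fourierInv_eq_fourier_neg, hF,
    Real.fourier_real_eq_integral_exp_smul] at hinv
  have hG_nonneg : ∀ ξ, 0 ≤ G ξ := fun ξ => by
    apply div_nonneg (by positivity) (by positivity)
  have hIntC : Integrable (fun ξ : ℝ => Complex.exp (↑(-2 * π * ξ * -b) * Complex.I) * (G ξ : ℂ)) := by
    refine (integrable_G ha).mono' ?_ ?_
    · apply Continuous.aestronglyMeasurable
      apply Continuous.mul
      · exact Complex.continuous_exp.comp
          ((Complex.continuous_ofReal.comp (by continuity)).mul continuous_const)
      · refine Complex.continuous_ofReal.comp ?_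
        exact continuous_const.div (by continuity) (fun ξ => by positivity)
    · filter_upwards with ξ
      simp only [norm_mul, Complex.norm_exp, Complex.norm_real, Real.norm_eq_abs,
        _root_.abs_of_nonneg (hG_nonneg ξ)]
      simp [hGdef]
  simp only [smul_eq_mul] at hinv
  have hre : ∫ ξ : ℝ, (Complex.exp (↑(-2 * π * ξ * -b) * Complex.I) * (G ξ : ℂ)).re
      = (f b).re := by
    have h := integral_re hIntC
    simp only [RCLike.re_to_complex] at h
    rw [h, hinv]
  have heq : ∀ ξ : ℝ, (Complex.exp (↑(-2 * π * ξ * -b) * Complex.I) * (G ξ : ℂ)).re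
      = Real.cos (2*π*ξ*b) * G ξ := by
    intro ξ
    have harg : (↑(-2*π*ξ*(-b)) : ℂ) * Complex.I = ↑((2*π*ξ*b : ℝ)) * Complex.I := by
      push_cast; ring
    rw [harg, Complex.mul_re, Complex.exp_ofReal_mul_I_re]
    simp
  simp only [heq] at hre
  rw [hre]
  show ((Real.exp (-(a*|b|)) : ℝ) : ℂ).re = _
  rw [Complex.ofReal_re, abs_of_pos hb]

theorem integral_cos_div (a b : ℝ) (ha : 0 < a) (hb : 0 < b) :
    ∫ t in Set.Ioi (0:ℝ), Real.cos (b * t) / (a ^ 2 + t ^ 2)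
      = (π / (2 * a)) * Real.exp (-(a * b)) := by
  have key := key_identity ha hb
  set H : ℝ → ℝ := fun t => Real.cos (b*t) * ((2*a)/(a^2+t^2)) with hH
  have hcomp := MeasureTheory.Measure.integral_comp_mul_left H (2*π)
  have h1 : (fun x : ℝ => H (2*π*x))
      = fun ξ : ℝ => Real.cos (2*π*ξ*b) * ((2*a)/(a^2+(2*π*ξ)^2)) := by
    funext ξ
    simp only [hH]
    ring_nf
  rw [h1, key, smul_eq_mul] at hcomp
  have h2pi : |(2*π)⁻¹| = (2*π)⁻¹ := abs_of_pos (by positivity)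
  rw [h2pi] at hcomp
  have hInt_all : ∫ t : ℝ, H t = 2*π*Real.exp (-(a*b)) := by
    field_simp at hcomp
    linarith [hcomp]
  have heven := integral_comp_abs (f := fun t : ℝ => Real.cos (b*t) / (a^2+t^2))
  have h3 : (fun x : ℝ => (fun t : ℝ => Real.cos (b*t) / (a^2+t^2)) |x|)
      = fun x : ℝ => Real.cos (b*x) / (a^2+x^2) := by
    funext x
    simp only
    rw [show b * |x| = |b*x| by rw [abs_mul, abs_of_pos hb], Real.cos_abs, _root_.sq_abs]
  rw [h3] at heven
  have h4 : ∫ x : ℝ, Real.cos (b*x) / (a^2+x^2) = (π/a) * Real.exp (-(a*b)) := by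
    have h5 : (fun x : ℝ => Real.cos (b*x) / (a^2+x^2)) = fun x : ℝ => (2*a)⁻¹ * H x := by
      funext x
      simp only [hH]
      field_simp
    rw [h5, integral_const_mul, hInt_all]
    have : π ≠ 0 := Real.pi_ne_zero
    field_simp
  rw [h4] at heven
  have h5 : ∫ t in Ioi (0:ℝ), Real.cos (b*t) / (a^2+t^2)
      = π / a * Real.exp (-(a*b)) / 2 := by linarith
  rw [h5]
  field_simp
end
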